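/- arXiv:1804.02995 — 3 statements merged into one kernel-verified Lean document; each statement's English description precedes it below -/
import Mathlib

section
/- Let X be a proper geodesic metric space, Γ a uniform lattice in Isom(X), and C a compact subset of X. Then there is a constant n = n(Γ,C) > 0 such that |{γ ∈ Γ : γg₁C ∩ g₂C ≠ ∅}| ≤ n for every pair of elements g₁, g₂ ∈ Isom(X). -/
open MeasureTheory Metric Set Filter

noncomputable section

variable {X : Type*}

/-- The Gromov product of `x` and `y` with respect to the basepoint `o`. -/
def gromovProd [MetricSpace X] (o x y : X) : ℝ :=
  (dist x o + dist y o - dist x y) / 2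

/-- A metric space is Gromov hyperbolic if it satisfies the four-point condition. -/
def IsGromovHyperbolic (X : Type*) [MetricSpace X] : Prop :=
  ∃ δ : ℝ, 0 ≤ δ ∧ ∀ o x y z : X,
    min (gromovProd o x y) (gromovProd o y z) - δ ≤ gromovProd o x z

/-- `f` is a unit speed geodesic from `x` to `y`, parametrized on `[0, dist x y]`. -/
def IsGeodesicFromTo {Y : Type*} [MetricSpace Y] (f : ℝ → Y) (x y : Y) : Prop :=
  f 0 = x ∧ f (dist x y) = y ∧
    ∀ s ∈ Icc (0 : ℝ) (dist x y), ∀ t ∈ Icc (0 : ℝ) (dist x y), dist (f s) (f t) = |s - t|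

/-- A geodesic metric space: any two points are joined by a geodesic. -/
def IsGeodesicSpace (X : Type*) [MetricSpace X] : Prop :=
  ∀ x y : X, ∃ f : ℝ → X, IsGeodesicFromTo f x y

/-- A geodesic ray (unit speed, defined on `[0,∞)`). -/
def IsGeodesicRayFun [MetricSpace X] (f : ℝ → X) : Prop :=
  ∀ s t : ℝ, 0 ≤ s → 0 ≤ t → dist (f s) (f t) = |s - t|

/-- A bi-infinite geodesic line. -/
def IsGeodesicLineFun [MetricSpace X] (f : ℝ → X) : Prop :=
  ∀ s t : ℝ, dist (f s) (f t) = |s - t|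

/-- The type of geodesic rays in `X`. -/
def GeodesicRay (X : Type*) [MetricSpace X] : Type _ := {f : ℝ → X // IsGeodesicRayFun f}

/-- Two geodesic rays are equivalent if they are at bounded (Hausdorff) distance. -/
instance raySetoid (X : Type*) [MetricSpace X] : Setoid (GeodesicRay X) where
  r f g := ∃ C : ℝ, ∀ t : ℝ, 0 ≤ t → dist (f.1 t) (g.1 t) ≤ C
  iseqv := by
    refine ⟨fun f => ⟨0, fun t _ => by simp⟩, ?_, ?_⟩
    · rintro f g ⟨C, h⟩
      exact ⟨C, fun t ht => by rw [dist_comm]; exact h t ht⟩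
    · rintro f g k ⟨C, h⟩ ⟨D, h'⟩
      exact ⟨C + D, fun t ht =>
        (dist_triangle _ (g.1 t) _).trans (add_le_add (h t ht) (h' t ht))⟩

/-- The Gromov boundary of `X`: equivalence classes of geodesic rays at bounded
Hausdorff distance from each other. -/
def GromovBoundary (X : Type*) [MetricSpace X] : Type _ := Quotient (raySetoid X)

/-- The boundary point determined by a geodesic ray. -/
def GromovBoundary.mk [MetricSpace X] (f : GeodesicRay X) : GromovBoundary X :=
  Quotient.mk (raySetoid X) f

/-- An isometry maps geodesic rays to geodesic rays. -/
def rayMap [MetricSpace X] (g : X ≃ᵢ X) (f : GeodesicRay X) : GeodesicRay X :=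
  ⟨fun t => g (f.1 t), fun s t hs ht => by
    rw [IsometryEquiv.dist_eq]; exact f.2 s t hs ht⟩

/-- The induced homeomorphism of the Gromov boundary. -/
def boundaryMap [MetricSpace X] (g : X ≃ᵢ X) : GromovBoundary X → GromovBoundary X :=
  Quotient.map (rayMap g) (by
    rintro f f' ⟨C, h⟩
    refine ⟨C, fun t ht => ?_⟩
    simpa [rayMap, IsometryEquiv.dist_eq] using h t ht)

/-- The fixed points of an isometry on the Gromov boundary. -/
def boundaryFixedPoints [MetricSpace X] (g : X ≃ᵢ X) : Set (GromovBoundary X) :=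
  {ξ | boundaryMap g ξ = ξ}

/-- An isometry is hyperbolic if it has infinite order and exactly two fixed
points on the Gromov boundary. -/
def IsHyperbolicIsom [MetricSpace X] (g : X ≃ᵢ X) : Prop :=
  ¬ IsOfFinOrder g ∧ ∃ ξ η : GromovBoundary X, ξ ≠ η ∧ boundaryFixedPoints g = {ξ, η}

/-- The compact-open topology on the isometry group of `X`. -/
instance isomTopology [MetricSpace X] : TopologicalSpace (X ≃ᵢ X) :=
  TopologicalSpace.induced (fun g : X ≃ᵢ X => (⟨g, g.continuous⟩ : C(X, X)))
    ContinuousMap.compactOpen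

instance isomMeasurableSpace [MetricSpace X] : MeasurableSpace (X ≃ᵢ X) := borel _

/-- The sequence `x` converges to the boundary point determined by the ray `f`:
the Gromov products `(x n | f t)_o` tend to infinity. -/
def ConvergesToRay [MetricSpace X] (o : X) (x : ℕ → X) (f : GeodesicRay X) : Prop :=
  ∀ M : ℝ, ∃ N : ℕ, ∃ T : ℝ, ∀ n ≥ N, ∀ t ≥ T, M ≤ gromovProd o (x n) (f.1 t)

/-- The limit set of a set `S` of isometries: all accumulation points in the
Gromov boundary of the orbit `S o`. -/
def gromovLimitSet [MetricSpace X] (o : X) (S : Set (X ≃ᵢ X)) : Set (GromovBoundary X) :=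
  {ξ | ∃ x : ℕ → X, (∀ n, ∃ g ∈ S, x n = g o) ∧
    ∃ f : GeodesicRay X, GromovBoundary.mk f = ξ ∧ ConvergesToRay o x f}

/-- A set of isometries is non-elementary if its limit set has more than two points. -/
def IsNonElementary [MetricSpace X] (o : X) (S : Set (X ≃ᵢ X)) : Prop :=
  ∃ ξ₁ ξ₂ ξ₃ : GromovBoundary X, ξ₁ ∈ gromovLimitSet o S ∧ ξ₂ ∈ gromovLimitSet o S ∧
    ξ₃ ∈ gromovLimitSet o S ∧ ξ₁ ≠ ξ₂ ∧ ξ₁ ≠ ξ₃ ∧ ξ₂ ≠ ξ₃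

/-- A set of isometries acts cocompactly on `X`. -/
def ActsCocompactly [MetricSpace X] (S : Set (X ≃ᵢ X)) : Prop :=
  ∃ C : Set X, IsCompact C ∧ ∀ x : X, ∃ g ∈ S, ∃ c ∈ C, g c = x

/-- A uniform lattice in `Isom(X)`: a discrete subgroup acting cocompactly on `X`. -/
def IsUniformLattice [MetricSpace X] (Γ : Subgroup (X ≃ᵢ X)) : Prop :=
  DiscreteTopology Γ ∧ ActsCocompactly (Γ : Set (X ≃ᵢ X))

/-- Convergence of the Poincaré series of `Γ` at the exponent `s`. -/
def PoincareSummable [MetricSpace X] (o : X) (Γ : Subgroup (X ≃ᵢ X)) (s : ℝ) : Prop :=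
  Summable fun γ : Γ => Real.exp (-s * dist o (γ.1 o))

/-- The critical exponent of a (discrete) group of isometries. -/
def critExp [MetricSpace X] (o : X) (Γ : Subgroup (X ≃ᵢ X)) : ℝ :=
  sInf {s : ℝ | 0 ≤ s ∧ PoincareSummable o Γ s}

/-- `Γ` is of divergence type: the Poincaré series diverges at the critical exponent. -/
def DivergenceType [MetricSpace X] (o : X) (Γ : Subgroup (X ≃ᵢ X)) : Prop :=
  ¬ PoincareSummable o Γ (critExp o Γ)

/-- The Gromov product of two boundary points, computed along representative rays. -/
def rayGromovProd [MetricSpace X] (o : X) (f g : GeodesicRay X) : ℝ :=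
  Filter.liminf (fun t : ℝ => gromovProd o (f.1 t) (g.1 t)) Filter.atTop

/-- `m` is a visual metric on the Gromov boundary with parameter `a` and basepoint `o`. -/
def IsVisualMetric [MetricSpace X] (o : X) (m : MetricSpace (GromovBoundary X)) (a : ℝ) : Prop :=
  1 < a ∧ ∃ k₁ k₂ : ℝ, 0 < k₁ ∧ 0 < k₂ ∧ ∀ f g : GeodesicRay X,
    k₁ * a ^ (-(rayGromovProd o f g)) ≤
        @dist _ m.toPseudoMetricSpace.toDist (GromovBoundary.mk f) (GromovBoundary.mk g) ∧
      @dist _ m.toPseudoMetricSpace.toDist (GromovBoundary.mk f) (GromovBoundary.mk g) ≤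
        k₂ * a ^ (-(rayGromovProd o f g))

/-- `d` is the Hausdorff dimension of the Gromov boundary of `X`: the Hausdorff
dimension of a visual metric with parameter `a` equals `log a * d`. -/
def HasBoundaryDim (X : Type*) [MetricSpace X] (o : X) (d : ℝ) : Prop :=
  0 ≤ d ∧ ∃ (m : MetricSpace (GromovBoundary X)) (a : ℝ), IsVisualMetric o m a ∧
    @dimH (GromovBoundary X) (@MetricSpace.toEMetricSpace _ m) Set.univ
      = ENNReal.ofReal (Real.log a * d)

/-- The Chabauty space of closed subgroups of a topological group. -/
def ChabautySpace (G : Type*) [Group G] [TopologicalSpace G] : Type _ :=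
  {H : Subgroup G // IsClosed (H : Set G)}

/-- The Chabauty topology, generated by the sets
`{H : H ∩ U ≠ ∅}` for `U` open and `{H : H ∩ K = ∅}` for `K` compact. -/
instance chabautyTopology (G : Type*) [Group G] [TopologicalSpace G] :
    TopologicalSpace (ChabautySpace G) :=
  TopologicalSpace.generateFrom
    ({S | ∃ U : Set G, IsOpen U ∧ S = {H : ChabautySpace G | ((H.1 : Set G) ∩ U).Nonempty}} ∪
      {S | ∃ K : Set G, IsCompact K ∧ S = {H : ChabautySpace G | (H.1 : Set G) ∩ K = ∅}})

instance chabautyMeasurableSpace (G : Type*) [Group G] [TopologicalSpace G] :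
    MeasurableSpace (ChabautySpace G) := borel _

/-- Conjugation of a subgroup. -/
def conjSubgroup {G : Type*} [Group G] (g : G) (H : Subgroup G) : Subgroup G :=
  Subgroup.map (MulAut.conj g).toMonoidHom H

lemma conjSubgroup_coe {G : Type*} [Group G] (g : G) (H : Subgroup G) :
    (conjSubgroup g H : Set G) = (fun x => g * x * g⁻¹) '' (H : Set G) := by
  ext x
  simp [conjSubgroup, Subgroup.mem_map, Set.mem_image]

/-- Conjugation on the Chabauty space of a topological group. -/
def chabautyConj {G : Type*} [Group G] [TopologicalSpace G] [IsTopologicalGroup G]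
    (g : G) (H : ChabautySpace G) : ChabautySpace G :=
  ⟨conjSubgroup g H.1, by
    have h1 : (conjSubgroup g H.1 : Set G) = (fun x => g⁻¹ * x * g) ⁻¹' (H.1 : Set G) := by
      rw [conjSubgroup_coe]
      ext x
      constructor
      · rintro ⟨y, hy, rfl⟩
        simpa [mul_assoc] using hy
      · intro hx
        exact ⟨g⁻¹ * x * g, hx, by group⟩
    rw [h1]
    exact H.2.preimage (by continuity)⟩

/-- An invariant random subgroup: a conjugation-invariant Borel probability
measure on the Chabauty space of closed subgroups. -/
def IsIRS {G : Type*} [Group G] [TopologicalSpace G] [IsTopologicalGroup G]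
    (μ : Measure (ChabautySpace G)) : Prop :=
  IsProbabilityMeasure μ ∧ ∀ g : G, Measure.map (chabautyConj g) μ = μ

end

noncomputable section

open Topology in
lemma discrete_small_is_one {X : Type*} [MetricSpace X]
    (Γ : Subgroup (X ≃ᵢ X)) (hd : DiscreteTopology Γ) :
    ∃ (K₀ : Set X) (ε : ℝ), IsCompact K₀ ∧ 0 < ε ∧
      ∀ γ : Γ, (∀ x ∈ K₀, dist ((γ : X ≃ᵢ X) x) x < ε) → γ = 1 := by
  have h1 : IsOpen ({1} : Set Γ) := isOpen_discrete _
  rw [isOpen_induced_iff] at h1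
  obtain ⟨U, hUo, hU1⟩ := h1
  rw [isOpen_induced_iff] at hUo
  obtain ⟨V, hVo, hVU⟩ := hUo
  set ι : (X ≃ᵢ X) → C(X, X) := fun g => (⟨g, g.continuous⟩ : C(X, X)) with hι
  have hidV : ι 1 ∈ V := by
    have h2 : ((1 : Γ) : X ≃ᵢ X) ∈ U := by
      have : (1 : Γ) ∈ (Subtype.val ⁻¹' U : Set Γ) := by rw [hU1]; rfl
      exact this
    have : ((1 : Γ) : X ≃ᵢ X) ∈ ι ⁻¹' V := by rw [hVU]; exact h2
    exact this
  have hV1 : V ∈ 𝓝 (ι 1) := hVo.mem_nhds hidV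
  rw [UniformSpace.mem_nhds_iff] at hV1
  obtain ⟨E, hE, hEV⟩ := hV1
  rw [ContinuousMap.mem_compactConvergence_entourage_iff] at hE
  obtain ⟨K₀, W, hK₀, hW, hsub⟩ := hE
  obtain ⟨ε, hε, hWd⟩ := Metric.mem_uniformity_dist.mp hW
  refine ⟨K₀, ε, hK₀, hε, fun γ hγ => ?_⟩
  have hmem : (ι 1, ι (γ : X ≃ᵢ X)) ∈ E := by
    apply hsub
    intro x hx
    exact hWd (by simpa [ι, dist_comm] using hγ x hx)
  have hmV : ι (γ : X ≃ᵢ X) ∈ V := hEV hmem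
  have hU : ((γ : X ≃ᵢ X)) ∈ U := by rw [← hVU]; exact hmV
  have : γ ∈ (Subtype.val ⁻¹' U : Set Γ) := hU
  rw [hU1] at this
  exact this

lemma finite_touching {X : Type*} [MetricSpace X] [ProperSpace X]
    (Γ : Subgroup (X ≃ᵢ X)) (hd : DiscreteTopology Γ)
    {K K' : Set X} (hK : IsCompact K) (hK' : IsCompact K') :
    {γ : Γ | (((γ : X ≃ᵢ X) '' K) ∩ K').Nonempty}.Finite := by
  obtain ⟨K₀, ε, hK₀, hε, hkey⟩ := discrete_small_is_one Γ hd
  set S := {γ : Γ | (((γ : X ≃ᵢ X) '' K) ∩ K').Nonempty} with hS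
  rcases S.eq_empty_or_nonempty with h | ⟨γ₀, hγ₀⟩
  · rw [h]; exact Set.finite_empty
  · obtain ⟨p, -, hpK'⟩ := hγ₀
    obtain ⟨M, hM⟩ := ((hK₀.union hK).union hK').isBounded.subset_closedBall p
    -- every element of S maps K₀ into the closed ball of radius 3M
    have hbound : ∀ γ ∈ S, ∀ x ∈ K₀, (γ : X ≃ᵢ X) x ∈ Metric.closedBall p (3 * M) := by
      intro γ hγ x hx
      obtain ⟨b, ⟨k, hk, hbk⟩, hbK'⟩ := hγ
      have h1 : dist ((γ : X ≃ᵢ X) x) p ≤ dist x k + dist b p := by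
        calc dist ((γ : X ≃ᵢ X) x) p ≤ dist ((γ : X ≃ᵢ X) x) ((γ : X ≃ᵢ X) k) + dist ((γ : X ≃ᵢ X) k) p :=
              dist_triangle _ _ _
          _ = dist x k + dist b p := by rw [IsometryEquiv.dist_eq, hbk]
      have hxp : dist x p ≤ M := hM (Or.inl (Or.inl hx))
      have hkp : dist k p ≤ M := hM (Or.inl (Or.inr hk))
      have hbp : dist b p ≤ M := hM (Or.inr hbK')
      have h2 : dist x k ≤ dist x p + dist p k := dist_triangle _ _ _
      rw [Metric.mem_closedBall]
      have : dist p k = dist k p := dist_comm _ _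
      linarith
    have hε5 : (0:ℝ) < ε / 5 := by linarith
    obtain ⟨t, htK₀, htfin, htcov⟩ := hK₀.finite_cover_balls hε5
    obtain ⟨u, huL, hufin, hucov⟩ := (isCompact_closedBall p (3 * M)).finite_cover_balls hε5
    haveI : Finite ↥t := htfin.to_subtype
    haveI : Finite ↥u := hufin.to_subtype
    rw [← Set.finite_coe_iff]
    have hchoice : ∀ (γ : ↥S) (x : ↥t), ∃ y : ↥u,
        ((γ.1 : X ≃ᵢ X)) x.1 ∈ Metric.ball y.1 (ε / 5) := by
      intro γ x
      have hx := hbound γ.1 γ.2 x.1 (htK₀ x.2)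
      have := hucov hx
      simp only [Set.mem_iUnion] at this
      obtain ⟨y, hy, hmem⟩ := this
      exact ⟨⟨y, hy⟩, hmem⟩
    choose f hf using hchoice
    apply Finite.of_injective f
    intro γ₁ γ₂ hf12
    have h1 : γ₁.1⁻¹ * γ₂.1 = 1 := by
      apply hkey
      intro z hz
      have := htcov hz
      simp only [Set.mem_iUnion] at this
      obtain ⟨x, hx, hzx⟩ := this
      set xx : ↥t := ⟨x, hx⟩
      have e1 := hf γ₁ xx
      have e2 := hf γ₂ xx
      rw [hf12] at e1
      set y := (f γ₂ xx).1 with hy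
      rw [Metric.mem_ball] at e1 e2 hzx
      -- rewrite the moved distance
      have hco : ((γ₁.1⁻¹ * γ₂.1 : Γ) : X ≃ᵢ X) = (γ₁.1 : X ≃ᵢ X)⁻¹ * (γ₂.1 : X ≃ᵢ X) := by
        push_cast; ring_nf
      have hdz : dist (((γ₁.1⁻¹ * γ₂.1 : Γ) : X ≃ᵢ X) z) z
          = dist ((γ₂.1 : X ≃ᵢ X) z) ((γ₁.1 : X ≃ᵢ X) z) := by
        rw [hco, IsometryEquiv.mul_apply]
        rw [← IsometryEquiv.dist_eq (γ₁.1 : X ≃ᵢ X), IsometryEquiv.apply_inv_self]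
      rw [hdz]
      have d1 : dist ((γ₂.1 : X ≃ᵢ X) z) ((γ₂.1 : X ≃ᵢ X) x) = dist z x :=
        IsometryEquiv.dist_eq _ _ _
      have d4 : dist ((γ₁.1 : X ≃ᵢ X) x) ((γ₁.1 : X ≃ᵢ X) z) = dist x z :=
        IsometryEquiv.dist_eq _ _ _
      have tri : dist ((γ₂.1 : X ≃ᵢ X) z) ((γ₁.1 : X ≃ᵢ X) z)
          ≤ dist ((γ₂.1 : X ≃ᵢ X) z) ((γ₂.1 : X ≃ᵢ X) x) + (dist ((γ₂.1 : X ≃ᵢ X) x) y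
            + dist y ((γ₁.1 : X ≃ᵢ X) x) + dist ((γ₁.1 : X ≃ᵢ X) x) ((γ₁.1 : X ≃ᵢ X) z)) :=
        (dist_triangle _ ((γ₂.1 : X ≃ᵢ X) x) _).trans
          (add_le_add le_rfl (dist_triangle4 _ _ _ _))
      have hyx : dist y ((γ₁.1 : X ≃ᵢ X) x) < ε / 5 := by rw [dist_comm]; exact e1
      have hxz : dist x z = dist z x := dist_comm _ _
      rw [d1, d4] at tri
      linarith
    have : γ₁.1 = γ₂.1 := by
      have := inv_mul_eq_one.mp h1
      exact this
    exact Subtype.ext this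

/-- Let `X` be a proper geodesic metric space, `Γ` a uniform lattice in
`Isom(X)` and `C ⊆ X` compact.  There is `n > 0` such that
`|{γ ∈ Γ : γg₁C ∩ g₂C ≠ ∅}| ≤ n` for all `g₁, g₂ ∈ Isom(X)`. -/
theorem uniform_lattice_uniformly_bounded_intersections
    {X : Type*} [MetricSpace X] [ProperSpace X]
    (hgeo : IsGeodesicSpace X)
    (Γ : Subgroup (X ≃ᵢ X)) (hΓ : IsUniformLattice Γ)
    (C : Set X) (hC : IsCompact C) :
    ∃ n : ℕ, 0 < n ∧ ∀ g₁ g₂ : X ≃ᵢ X,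
      ({γ : Γ | (((γ : X ≃ᵢ X) '' (g₁ '' C)) ∩ (g₂ '' C)).Nonempty}).Finite ∧
      ({γ : Γ | (((γ : X ≃ᵢ X) '' (g₁ '' C)) ∩ (g₂ '' C)).Nonempty}).ncard ≤ n := by
  obtain ⟨hdisc, K, hKc, hKcov⟩ := hΓ
  rcases C.eq_empty_or_nonempty with rfl | ⟨o, ho⟩
  · refine ⟨1, one_pos, fun g₁ g₂ => ?_⟩
    have he : {γ : Γ | (((γ : X ≃ᵢ X) '' (g₁ '' (∅ : Set X))) ∩ (g₂ '' ∅)).Nonempty} = ∅ := by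
      simp
    rw [he]
    exact ⟨Set.finite_empty, by simp⟩
  · obtain ⟨D, hD⟩ := hC.isBounded.subset_closedBall o
    have hK'c : IsCompact (Metric.cthickening (2 * D) K) := hKc.cthickening
    have hfin := finite_touching Γ hdisc hKc hK'c
    set K' := Metric.cthickening (2 * D) K with hK'
    set S₀ := {γ : Γ | (((γ : X ≃ᵢ X) '' K) ∩ K').Nonempty} with hS₀
    refine ⟨S₀.ncard + 1, Nat.succ_pos _, fun g₁ g₂ => ?_⟩
    obtain ⟨γ₁, hγ₁Γ, c₁, hc₁, hγ₁⟩ := hKcov (g₁ o)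
    obtain ⟨γ₂, hγ₂Γ, c₂, hc₂, hγ₂⟩ := hKcov (g₂ o)
    set φ : Γ → Γ := fun γ => (⟨γ₂, hγ₂Γ⟩ : Γ)⁻¹ * γ * (⟨γ₁, hγ₁Γ⟩ : Γ) with hφ
    have hφinj : Function.Injective φ := fun a b h =>
      mul_left_cancel (mul_right_cancel h)
    set S := {γ : Γ | (((γ : X ≃ᵢ X) '' (g₁ '' C)) ∩ (g₂ '' C)).Nonempty} with hSdef
    have hmaps : ∀ γ ∈ S, φ γ ∈ S₀ := by
      intro γ hγ
      obtain ⟨b, hb1, hb2⟩ := hγ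
      obtain ⟨w, hw, hbw⟩ := hb1
      obtain ⟨c, hc, hwc⟩ := hw
      obtain ⟨c', hc', hbc'⟩ := hb2
      refine ⟨((φ γ : X ≃ᵢ X)) c₁, ⟨c₁, hc₁, rfl⟩, ?_⟩
      apply Metric.mem_cthickening_of_dist_le _ c₂ _ _ hc₂
      have h0 : ((φ γ : X ≃ᵢ X)) c₁ = γ₂⁻¹ ((γ : X ≃ᵢ X) (g₁ o)) := by
        have : ((φ γ : X ≃ᵢ X)) = γ₂⁻¹ * (γ : X ≃ᵢ X) * γ₁ := by
          rw [hφ]; push_cast; ring_nf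
        rw [this, IsometryEquiv.mul_apply, IsometryEquiv.mul_apply, hγ₁]
      rw [h0]
      have h1 : dist (γ₂⁻¹ ((γ : X ≃ᵢ X) (g₁ o))) c₂ = dist ((γ : X ≃ᵢ X) (g₁ o)) (g₂ o) := by
        rw [← hγ₂, ← IsometryEquiv.dist_eq γ₂, IsometryEquiv.apply_inv_self]
      rw [h1]
      have h2 : (γ : X ≃ᵢ X) (g₁ c) = g₂ c' := by rw [hwc, hbw, ← hbc']
      have hoD : dist o c ≤ D := by
        rw [dist_comm]; exact Metric.mem_closedBall.mp (hD hc)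
      have hc'D : dist c' o ≤ D := Metric.mem_closedBall.mp (hD hc')
      calc dist ((γ : X ≃ᵢ X) (g₁ o)) (g₂ o)
          ≤ dist ((γ : X ≃ᵢ X) (g₁ o)) ((γ : X ≃ᵢ X) (g₁ c)) + dist ((γ : X ≃ᵢ X) (g₁ c)) (g₂ o) :=
            dist_triangle _ _ _
        _ = dist o c + dist c' o := by
            rw [IsometryEquiv.dist_eq, IsometryEquiv.dist_eq, h2, IsometryEquiv.dist_eq]
        _ ≤ D + D := add_le_add hoD hc'D
        _ = 2 * D := by ring
    have hfin2 : S.Finite := (hfin.preimage hφinj.injOn).subset hmaps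
    refine ⟨hfin2, ?_⟩
    calc S.ncard = (φ '' S).ncard := (Set.ncard_image_of_injective _ hφinj).symm
      _ ≤ S₀.ncard := Set.ncard_le_ncard (Set.image_subset_iff.mpr hmaps) hfin
      _ ≤ S₀.ncard + 1 := Nat.le_succ _

end
end

section
/- Let X be a proper geodesic Gromov hyperbolic metric space with basepoint o ∈ X and Γ a uniform lattice in Isom(X). For all sufficiently large radii k, R > 0 there is an integer p ∈ ℕ such that for every r > 0 the shadows S_R(o, γo) with γ ∈ A_Γ[r, r+k] cover ∂X, and moreover each ideal point ξ ∈ ∂X belongs to at most p of these shadows. -/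
open MeasureTheory Metric Set Filter

noncomputable section

/-- The shadow from `x` of the ball of radius `R` around `y`: the set of ideal points `ξ`
such that every geodesic ray from `x` to `ξ` meets `B_X(y, R)`. -/
def boundaryShadow {X : Type*} [MetricSpace X] (R : ℝ) (x y : X) :
    Set (GromovBoundary X) :=
  {ξ | ∀ f : GeodesicRay X, f.1 0 = x → GromovBoundary.mk f = ξ →
    ∃ t : ℝ, 0 ≤ t ∧ f.1 t ∈ ball y R}


/-! ### Auxiliary lemmas -/

section AuxLemmas

open Topology

variable {X : Type*}

lemma discrete_sep [MetricSpace X] {Γ : Subgroup (X ≃ᵢ X)} (hd : DiscreteTopology Γ) :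
    ∃ (K : Set X) (ε : ℝ), IsCompact K ∧ 0 < ε ∧
      ∀ γ : Γ, (∀ x ∈ K, dist x ((γ : X ≃ᵢ X) x) < ε) → γ = 1 := by
  have h1 : ({1} : Set Γ) ∈ 𝓝 (1 : Γ) := by
    rw [nhds_discrete]; exact mem_pure.2 rfl
  set ι : (X ≃ᵢ X) → C(X, X) := fun g => ⟨g, g.continuous⟩ with hι
  have hnhds : 𝓝 ((1 : Γ) : X ≃ᵢ X) = comap ι (𝓝 (ι 1)) := nhds_induced ι _
  rw [nhds_subtype_eq_comap, hnhds] at h1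
  obtain ⟨W1, hW1, hsub1⟩ := mem_comap.1 h1
  obtain ⟨W, hW, hsub⟩ := mem_comap.1 hW1
  have hbasis := nhds_basis_uniformity' (Metric.uniformity_basis_dist.compactConvergenceUniformity
    (α := X) (β := X)) (x := ι 1)
  obtain ⟨⟨K, ε⟩, ⟨hK, hε⟩, hsub2⟩ := hbasis.mem_iff.1 hW
  refine ⟨K, ε, hK, hε, fun γ hγ => ?_⟩
  have hmem : ι ((γ : Γ) : X ≃ᵢ X) ∈ W := by
    apply hsub2
    intro x hx
    exact hγ x hx
  have : (γ : Γ) ∈ ({1} : Set Γ) := hsub1 (hsub hmem)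
  simpa using this

lemma finite_ball_lattice [MetricSpace X] [ProperSpace X] {Γ : Subgroup (X ≃ᵢ X)}
    (hd : DiscreteTopology Γ) (o : X) (c : ℝ) :
    {γ : Γ | dist ((γ : X ≃ᵢ X) o) o ≤ c}.Finite := by
  classical
  obtain ⟨K, ε, hK, hε, hsep⟩ := discrete_sep hd
  have hsep2 : ∀ γ β : Γ, γ ≠ β → ∃ x ∈ K, ε ≤ dist ((γ : X ≃ᵢ X) x) ((β : X ≃ᵢ X) x) := by
    intro γ β hne
    by_contra hcon
    push_neg at hcon
    have : (β⁻¹ * γ : Γ) = 1 := by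
      apply hsep
      intro x hx
      have : dist x (((β⁻¹ * γ : Γ) : X ≃ᵢ X) x) = dist ((β : X ≃ᵢ X) x) ((γ : X ≃ᵢ X) x) := by
        have h1 : (((β⁻¹ * γ : Γ) : X ≃ᵢ X) x) = ((β : X ≃ᵢ X))⁻¹ (((γ : X ≃ᵢ X)) x) := by
          simp [Subgroup.coe_mul, IsometryEquiv.mul_apply]
        rw [h1]
        have h2 := IsometryEquiv.dist_eq (β : X ≃ᵢ X) x (((β : X ≃ᵢ X))⁻¹ (((γ : X ≃ᵢ X)) x))
        simp only [IsometryEquiv.apply_inv_self] at h2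
        rw [← h2]
      rw [this, dist_comm]
      exact hcon x hx
    exact hne (inv_mul_eq_one.1 this).symm
  by_contra hfin
  have hinf : {γ : Γ | dist ((γ : X ≃ᵢ X) o) o ≤ c}.Infinite := hfin
  obtain ⟨M, hM⟩ := hK.isBounded.subset_closedBall o
  set c' := max c 0 with hc'
  have horb : ∀ γ : Γ, dist ((γ : X ≃ᵢ X) o) o ≤ c → ∀ x ∈ K,
      ((γ : X ≃ᵢ X) x) ∈ closedBall o (M + c') := by
    intro γ hγ x hx
    have h1 : dist ((γ : X ≃ᵢ X) x) ((γ : X ≃ᵢ X) o) = dist x o := IsometryEquiv.dist_eq _ _ _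
    have h2 : dist x o ≤ M := hM hx
    have := dist_triangle ((γ : X ≃ᵢ X) x) ((γ : X ≃ᵢ X) o) o
    simp only [mem_closedBall]
    have : dist ((γ : X ≃ᵢ X) x) o ≤ dist x o + dist ((γ : X ≃ᵢ X) o) o := by linarith
    have hcc : c ≤ c' := le_max_left _ _
    linarith
  obtain ⟨tK, htK⟩ := hK.elim_finite_subcover (fun x : K => ball (x : X) (ε/5))
    (fun x => isOpen_ball) (fun x hx => mem_iUnion.2 ⟨⟨x, hx⟩, mem_ball_self (by linarith)⟩)
  obtain ⟨tB, htB⟩ := (isCompact_closedBall o (M + c')).elim_finite_subcover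
    (fun x : X => ball x (ε/5)) (fun x => isOpen_ball)
    (fun x hx => mem_iUnion.2 ⟨x, mem_ball_self (by linarith)⟩)
  set TB : Finset X := insert o tB with hTB
  set code : Γ → (tK → TB) := fun γ j =>
    if h : ∃ y ∈ TB, ((γ : X ≃ᵢ X) ((j : K) : X)) ∈ ball y (ε/5) then
      ⟨h.choose, h.choose_spec.1⟩ else ⟨o, Finset.mem_insert_self o tB⟩ with hcode
  have hcode_spec : ∀ γ : Γ, dist ((γ : X ≃ᵢ X) o) o ≤ c → ∀ j : tK,
      ((γ : X ≃ᵢ X) ((j : K) : X)) ∈ ball ((code γ j : X)) (ε/5) := by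
    intro γ hγ j
    have hj : ((j : K) : X) ∈ K := (j : K).2
    have hmem : ((γ : X ≃ᵢ X) ((j : K) : X)) ∈ closedBall o (M + c') := horb γ hγ _ hj
    have := htB hmem
    rw [mem_iUnion₂] at this
    obtain ⟨y, hy1, hy2⟩ := this
    have hex : ∃ y ∈ TB, ((γ : X ≃ᵢ X) ((j : K) : X)) ∈ ball y (ε/5) :=
      ⟨y, Finset.mem_insert_of_mem hy1, hy2⟩
    simp only [hcode, dif_pos hex]
    exact hex.choose_spec.2
  obtain ⟨γ, hγ, β, hβ, hne, heq⟩ := hinf.exists_ne_map_eq_of_mapsTo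
    (Set.mapsTo_univ code _) (Set.finite_univ (α := tK → TB))
  obtain ⟨x, hxK, hxsep⟩ := hsep2 γ β hne
  have hx' := htK hxK
  rw [mem_iUnion₂] at hx'
  obtain ⟨j, hj1, hj2⟩ := hx'
  set z : X := ((j : K) : X) with hz
  have h1 : dist ((γ : X ≃ᵢ X) x) ((γ : X ≃ᵢ X) z) < ε/5 := by
    rw [IsometryEquiv.dist_eq]; exact mem_ball.1 hj2
  have h4 : dist ((β : X ≃ᵢ X) z) ((β : X ≃ᵢ X) x) < ε/5 := by
    rw [IsometryEquiv.dist_eq, dist_comm]; exact mem_ball.1 hj2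
  have hγS : dist ((γ : X ≃ᵢ X) o) o ≤ c := hγ
  have hβS : dist ((β : X ≃ᵢ X) o) o ≤ c := hβ
  have h2 : dist ((γ : X ≃ᵢ X) z) ((code γ ⟨j, hj1⟩ : X)) < ε/5 :=
    mem_ball.1 (hcode_spec γ hγS ⟨j, hj1⟩)
  have h3 : dist ((β : X ≃ᵢ X) z) ((code β ⟨j, hj1⟩ : X)) < ε/5 :=
    mem_ball.1 (hcode_spec β hβS ⟨j, hj1⟩)
  have hcd : (code γ ⟨j, hj1⟩ : X) = (code β ⟨j, hj1⟩ : X) := by rw [heq]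
  have : dist ((γ : X ≃ᵢ X) x) ((β : X ≃ᵢ X) x) < ε := by
    have t1 := dist_triangle ((γ : X ≃ᵢ X) x) ((γ : X ≃ᵢ X) z) ((β : X ≃ᵢ X) x)
    have t2 := dist_triangle ((γ : X ≃ᵢ X) z) ((code γ ⟨j, hj1⟩ : X)) ((β : X ≃ᵢ X) x)
    have t3 := dist_triangle ((code γ ⟨j, hj1⟩ : X)) ((β : X ≃ᵢ X) z) ((β : X ≃ᵢ X) x)
    have h3' : dist ((code γ ⟨j, hj1⟩ : X)) ((β : X ≃ᵢ X) z) < ε/5 := by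
      rw [hcd, dist_comm]; exact h3
    linarith
  linarith

section Rays
variable [MetricSpace X] {o : X}

lemma dist_ray (f : GeodesicRay X) (h0 : f.1 0 = o) {t : ℝ} (ht : 0 ≤ t) :
    dist (f.1 t) o = t := by
  rw [← h0, f.2 t 0 ht le_rfl, sub_zero, abs_of_nonneg ht]

lemma gp_ray (f : GeodesicRay X) (h0 : f.1 0 = o) {s t : ℝ} (hs : 0 ≤ s) (hst : s ≤ t) :
    gromovProd o (f.1 s) (f.1 t) = s := by
  have ht : (0:ℝ) ≤ t := hs.trans hst
  have h1 := dist_ray f h0 hs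
  have h2 := dist_ray f h0 ht
  have h3 : dist (f.1 s) (f.1 t) = t - s := by
    rw [f.2 s t hs ht, abs_of_nonpos (by linarith)]; ring
  simp only [gromovProd, h1, h2, h3]; ring

lemma rays_close {δ : ℝ} (hδ : 0 ≤ δ)
    (hX : ∀ o x y z : X, min (gromovProd o x y) (gromovProd o y z) - δ ≤ gromovProd o x z)
    (f h : GeodesicRay X) (hf0 : f.1 0 = o) (hh0 : h.1 0 = o)
    {C : ℝ} (hC : ∀ t : ℝ, 0 ≤ t → dist (f.1 t) (h.1 t) ≤ C) :
    ∀ t : ℝ, 0 ≤ t → dist (f.1 t) (h.1 t) ≤ 4 * δ := by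
  intro t ht
  have hC0 : 0 ≤ C := le_trans dist_nonneg (hC 0 le_rfl)
  obtain ⟨T, hT⟩ : ∃ T : ℝ, T = t + C / 2 := ⟨_, rfl⟩
  have hTnn : 0 ≤ T := by rw [hT]; positivity
  have htT : t ≤ T := by rw [hT]; linarith
  have e1 : gromovProd o (f.1 t) (f.1 T) = t := gp_ray f hf0 ht htT
  have e2 : gromovProd o (h.1 T) (h.1 t) = t := by
    have h' : gromovProd o (h.1 t) (h.1 T) = t := gp_ray h hh0 ht htT
    simp only [gromovProd] at h' ⊢
    rw [dist_comm (h.1 T) (h.1 t)]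
    linarith
  have e3 : t ≤ gromovProd o (f.1 T) (h.1 T) := by
    have d1 := dist_ray f hf0 hTnn
    have d2 := dist_ray h hh0 hTnn
    have d3 := hC T hTnn
    simp only [gromovProd, d1, d2]
    linarith
  have i1 := hX o (f.1 t) (f.1 T) (h.1 T)
  have i2 := hX o (f.1 t) (h.1 T) (h.1 t)
  have m1 : t ≤ min (gromovProd o (f.1 t) (f.1 T)) (gromovProd o (f.1 T) (h.1 T)) :=
    le_min (le_of_eq e1.symm) e3
  have m2 : t - δ ≤ gromovProd o (f.1 t) (h.1 T) := by linarith
  have m3 : t - δ ≤ min (gromovProd o (f.1 t) (h.1 T)) (gromovProd o (h.1 T) (h.1 t)) :=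
    le_min m2 (by rw [e2]; linarith)
  have m4 : t - 2*δ ≤ gromovProd o (f.1 t) (h.1 t) := by linarith
  have d1 := dist_ray f hf0 ht
  have d2 := dist_ray h hh0 ht
  simp only [gromovProd, d1, d2] at m4
  linarith

end Rays

section Construct
variable [MetricSpace X] [ProperSpace X]

/-- cluster-point transfer: a closed condition that holds eventually holds at the cluster point -/
lemma clusterPt_mem_closed {Y Z : Type*} [TopologicalSpace Y] [TopologicalSpace Z]
    {F : Y} {u : ℕ → Y} (hF : MapClusterPt F atTop u) {φ : Y → Z} (hφ : Continuous φ)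
    {s : Set Z} (hs : IsClosed s) (h : ∀ᶠ n in atTop, φ (u n) ∈ s) : φ F ∈ s := by
  have h1 : MapClusterPt (φ F) atTop (φ ∘ u) := hF.continuousAt_comp hφ.continuousAt
  rw [← hs.closure_eq, mem_closure_iff_nhds]
  intro V hV
  have h2 := (mapClusterPt_iff_frequently.1 h1) V hV
  obtain ⟨n, hn1, hn2⟩ := (h2.and_eventually h).exists
  exact ⟨φ (u n), hn1, hn2⟩

lemma exists_ray_from (hgeo : IsGeodesicSpace X)
    {δ : ℝ} (hδ : 0 ≤ δ)
    (hX : ∀ o x y z : X, min (gromovProd o x y) (gromovProd o y z) - δ ≤ gromovProd o x z)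
    (o : X) (g : GeodesicRay X) :
    ∃ f : GeodesicRay X, f.1 0 = o ∧
      ∀ t : ℝ, 0 ≤ t → dist (f.1 t) (g.1 t) ≤ 3 * dist (g.1 0) o + 2 * δ := by
  classical
  set a := dist (g.1 0) o with ha
  have ha0 : 0 ≤ a := dist_nonneg
  choose fn hfn using fun n : ℕ => hgeo o (g.1 (n : ℝ))
  have hfn0 : ∀ n : ℕ, fn n 0 = o := fun n => (hfn n).1
  have hfnD : ∀ n : ℕ, fn n (dist o (g.1 (n : ℝ))) = g.1 (n : ℝ) := fun n => (hfn n).2.1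
  have hfniso : ∀ n : ℕ, ∀ s ∈ Icc (0:ℝ) (dist o (g.1 (n:ℝ))),
      ∀ t ∈ Icc (0:ℝ) (dist o (g.1 (n:ℝ))), dist (fn n s) (fn n t) = |s - t| :=
    fun n => (hfn n).2.2
  set D : ℕ → ℝ := fun n => dist o (g.1 (n : ℝ)) with hDdef
  have hDnn : ∀ n, 0 ≤ D n := fun n => dist_nonneg
  have hgdist : ∀ s t : ℝ, 0 ≤ s → s ≤ t → dist (g.1 s) (g.1 t) = t - s := by
    intro s t hs hst
    rw [g.2 s t hs (hs.trans hst), abs_of_nonpos (by linarith)]; ring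
  have hDlb : ∀ n : ℕ, (n : ℝ) - a ≤ D n := by
    intro n
    have h1 : dist (g.1 0) (g.1 (n : ℝ)) = (n : ℝ) := by
      rw [hgdist 0 (n : ℝ) le_rfl (Nat.cast_nonneg n)]; ring
    have h2 := dist_triangle (g.1 0) o (g.1 (n : ℝ))
    have h3 : dist o (g.1 (n : ℝ)) = D n := rfl
    linarith
  have hfn_dist : ∀ n : ℕ, ∀ s ∈ Icc (0:ℝ) (D n), dist (fn n s) o = s := by
    intro n s hs
    rw [← hfn0 n, hfniso n s hs 0 ⟨le_rfl, hDnn n⟩, sub_zero, abs_of_nonneg hs.1]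
  set clamp : ℕ → ℝ → ℝ := fun n t => min (max t 0) (D n) with hclamp
  have hclamp_mem : ∀ n t, clamp n t ∈ Icc (0:ℝ) (D n) := by
    intro n t
    exact ⟨le_min (le_max_right t 0) (hDnn n), min_le_right _ _⟩
  haveI : ∀ t : ℝ, CompactSpace (closedBall o (max t 0) : Set X) :=
    fun t => isCompact_iff_compactSpace.1 (isCompact_closedBall _ _)
  set P : Type _ := ∀ t : ℝ, (closedBall o (max t 0) : Set X) with hP
  set Fn : ℕ → P := fun n t => ⟨fn n (clamp n t), by
    rw [mem_closedBall, hfn_dist n _ (hclamp_mem n t)]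
    exact min_le_left _ _⟩ with hFn
  obtain ⟨F, hF⟩ := exists_clusterPt_of_compactSpace (map Fn atTop)
  have hF' : MapClusterPt F atTop Fn := hF
  set f : ℝ → X := fun t => (F t : X) with hf
  have hclamp_eq : ∀ t : ℝ, 0 ≤ t → ∀ n : ℕ, t + a ≤ (n : ℝ) → clamp n t = t := by
    intro t ht n hn
    have h1 : t ≤ D n := by have := hDlb n; linarith
    simp only [hclamp]
    rw [max_eq_left ht, min_eq_left h1]
  have hray : ∀ s t : ℝ, 0 ≤ s → 0 ≤ t → dist (f s) (f t) = |s - t| := by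
    intro s t hs ht
    have hcont : Continuous (fun F' : P => dist (F' s : X) (F' t : X)) :=
      Continuous.dist ((continuous_apply s).subtype_val) ((continuous_apply t).subtype_val)
    have hev : ∀ᶠ n in atTop, dist ((Fn n) s : X) ((Fn n) t : X) = |s - t| := by
      filter_upwards [eventually_ge_atTop ⌈max s t + a⌉₊] with n hn
      have hn' : max s t + a ≤ (n : ℝ) := le_trans (Nat.le_ceil _) (Nat.cast_le.2 hn)
      have hns : s + a ≤ (n : ℝ) := by have := le_max_left s t; linarith
      have hnt : t + a ≤ (n : ℝ) := by have := le_max_right s t; linarith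
      have hsD : s ≤ D n := by have := hDlb n; linarith
      have htD : t ≤ D n := by have := hDlb n; linarith
      show dist (fn n (clamp n s)) (fn n (clamp n t)) = |s - t|
      rw [hclamp_eq s hs n hns, hclamp_eq t ht n hnt]
      exact hfniso n s ⟨hs, hsD⟩ t ⟨ht, htD⟩
    have := clusterPt_mem_closed hF' hcont (isClosed_singleton (x := |s - t|))
      (by filter_upwards [hev] with n hn using hn)
    exact this
  have hf0 : f 0 = o := by
    have := (F 0).2
    rw [mem_closedBall] at this
    have h2 : dist (f 0) o ≤ 0 := by simpa using this
    exact dist_le_zero.1 h2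
  have hclose : ∀ t : ℝ, 0 ≤ t → dist (f t) (g.1 t) ≤ 3 * a + 2 * δ := by
    intro t ht
    have hcont : Continuous (fun F' : P => dist (F' t : X) (g.1 t)) :=
      Continuous.dist ((continuous_apply t).subtype_val) continuous_const
    have hev : ∀ᶠ n in atTop, dist ((Fn n) t : X) (g.1 t) ≤ 3 * a + 2 * δ := by
      filter_upwards [eventually_ge_atTop ⌈t + a⌉₊] with n hn
      have hn' : t + a ≤ (n : ℝ) := le_trans (Nat.le_ceil _) (Nat.cast_le.2 hn)
      have htn : t ≤ (n : ℝ) := by linarith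
      have htD : t ≤ D n := by have := hDlb n; linarith
      have hc : clamp n t = t := hclamp_eq t ht n hn'
      show dist (fn n (clamp n t)) (g.1 t) ≤ 3 * a + 2 * δ
      rw [hc]
      have d1 : dist (fn n t) o = t := hfn_dist n t ⟨ht, htD⟩
      have d2 : dist (fn n t) (g.1 (n:ℝ)) = D n - t := by
        rw [← hfnD n, hfniso n t ⟨ht, htD⟩ (D n) ⟨hDnn n, le_rfl⟩,
          abs_of_nonpos (by linarith)]; ring
      have d3 : dist (g.1 (n:ℝ)) o = D n := dist_comm o (g.1 (n:ℝ)) ▸ rfl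
      have d4 : dist (g.1 t) o ≤ t + a := by
        have h1 := dist_triangle (g.1 t) (g.1 0) o
        have h2 : dist (g.1 t) (g.1 0) = t := by
          rw [g.2 t 0 ht le_rfl, sub_zero, abs_of_nonneg ht]
        linarith
      have d5 : t - a ≤ dist (g.1 t) o := by
        have h1 := dist_triangle (g.1 0) o (g.1 t)
        have h2 : dist (g.1 0) (g.1 t) = t := by
          rw [hgdist 0 t le_rfl ht]; ring
        have h3 : dist (g.1 0) o = a := rfl
        have h4 : dist o (g.1 t) = dist (g.1 t) o := dist_comm _ _
        linarith
      have d6 : dist (g.1 (n:ℝ)) (g.1 t) = (n:ℝ) - t := by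
        rw [dist_comm, hgdist t (n:ℝ) ht htn]
      have gpA : gromovProd o (fn n t) (g.1 (n:ℝ)) = t := by
        simp only [gromovProd, d1, d2, d3]; ring
      have gpB : t - a ≤ gromovProd o (g.1 (n:ℝ)) (g.1 t) := by
        simp only [gromovProd, d3, d6]
        have := hDlb n
        linarith
      have i := hX o (fn n t) (g.1 (n:ℝ)) (g.1 t)
      have m : t - a - δ ≤ gromovProd o (fn n t) (g.1 t) := by
        have hmin : t - a ≤ min (gromovProd o (fn n t) (g.1 (n:ℝ)))
            (gromovProd o (g.1 (n:ℝ)) (g.1 t)) :=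
          le_min (by rw [gpA]; linarith) gpB
        linarith
      simp only [gromovProd, d1] at m
      linarith
    exact clusterPt_mem_closed hF' hcont isClosed_Iic
      (by filter_upwards [hev] with n hn using hn)
  exact ⟨⟨f, hray⟩, hf0, hclose⟩

end Construct

end AuxLemmas

/-- (Covering lemma for shadows.)  Let `Γ` be a uniform lattice in
`Isom(X)`.  For all sufficiently large `k, R > 0` there is `p ∈ ℕ` such that for every
`r > 0` the shadows `S_R(o, γo)`, `γ ∈ A_Γ[r, r+k]`, cover `∂X`, and each ideal point lies
in at most `p` of them. -/
theorem shadows_cover_boundary_with_bounded_multiplicity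
    {X : Type*} [MetricSpace X] [ProperSpace X]
    (hgeo : IsGeodesicSpace X) (hhyp : IsGromovHyperbolic X) (o : X)
    (Γ : Subgroup (X ≃ᵢ X)) (hΓ : IsUniformLattice Γ) :
    ∃ k₀ R₀ : ℝ, 0 < k₀ ∧ 0 < R₀ ∧ ∀ k ≥ k₀, ∀ R ≥ R₀, ∃ p : ℕ, ∀ r : ℝ, 0 < r →
      (∀ ξ : GromovBoundary X, ∃ γ : Γ,
        (r ≤ dist ((γ : X ≃ᵢ X) o) o ∧ dist ((γ : X ≃ᵢ X) o) o ≤ r + k) ∧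
          ξ ∈ boundaryShadow R o ((γ : X ≃ᵢ X) o)) ∧
      (∀ ξ : GromovBoundary X,
        ({γ : Γ | (r ≤ dist ((γ : X ≃ᵢ X) o) o ∧ dist ((γ : X ≃ᵢ X) o) o ≤ r + k) ∧
            ξ ∈ boundaryShadow R o ((γ : X ≃ᵢ X) o)}).Finite ∧
        ({γ : Γ | (r ≤ dist ((γ : X ≃ᵢ X) o) o ∧ dist ((γ : X ≃ᵢ X) o) o ≤ r + k) ∧
            ξ ∈ boundaryShadow R o ((γ : X ≃ᵢ X) o)}).ncard ≤ p) := by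
  obtain ⟨δ, hδ, hyp4⟩ := hhyp
  obtain ⟨hdisc, Cpt, hCcomp, hCcover⟩ := hΓ
  obtain ⟨D0, hD0⟩ := hCcomp.isBounded.subset_closedBall o
  have hDnn : (0:ℝ) ≤ max D0 0 := le_max_right _ _
  set D : ℝ := max D0 0 with hDdef
  have hDcover : ∀ x : X, ∃ γ : Γ, dist ((γ : X ≃ᵢ X) o) x ≤ D := by
    intro x
    obtain ⟨gg, hgg, c, hc, hgc⟩ := hCcover x
    refine ⟨⟨gg, hgg⟩, ?_⟩
    have h1 : dist (gg o) (gg c) = dist o c := IsometryEquiv.dist_eq gg o c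
    have h2 : dist c o ≤ D0 := hD0 hc
    have h3 : dist o c = dist c o := dist_comm _ _
    have h4 : D0 ≤ D := le_max_left _ _
    calc dist (gg o) x = dist (gg o) (gg c) := by rw [hgc]
      _ = dist o c := h1
      _ ≤ D := by rw [h3]; linarith
  refine ⟨2 * D + 1, 4 * δ + D + 1, by linarith, by linarith, ?_⟩
  intro k hk R hR
  have hSfin : {γ : Γ | dist ((γ : X ≃ᵢ X) o) o ≤ (k + 3 * R) + D}.Finite :=
    finite_ball_lattice hdisc o _
  refine ⟨{γ : Γ | dist ((γ : X ≃ᵢ X) o) o ≤ (k + 3 * R) + D}.ncard, ?_⟩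
  have hcount : ∀ x : X, {γ : Γ | dist ((γ : X ≃ᵢ X) o) x ≤ k + 3 * R}.Finite ∧
      {γ : Γ | dist ((γ : X ≃ᵢ X) o) x ≤ k + 3 * R}.ncard ≤
        {γ : Γ | dist ((γ : X ≃ᵢ X) o) o ≤ (k + 3 * R) + D}.ncard := by
    intro x
    obtain ⟨γ₀, hγ₀⟩ := hDcover x
    have hsub : {γ : Γ | dist ((γ : X ≃ᵢ X) o) x ≤ k + 3 * R} ⊆
        (fun β : Γ => γ₀ * β) '' {γ : Γ | dist ((γ : X ≃ᵢ X) o) o ≤ (k + 3 * R) + D} := by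
      intro γ hγ
      refine ⟨γ₀⁻¹ * γ, ?_, by group⟩
      have h1 : ((γ₀⁻¹ * γ : Γ) : X ≃ᵢ X) o = ((γ₀ : X ≃ᵢ X))⁻¹ ((γ : X ≃ᵢ X) o) := by
        simp [Subgroup.coe_mul, IsometryEquiv.mul_apply]
      have h2 := IsometryEquiv.dist_eq ((γ₀ : X ≃ᵢ X))⁻¹ ((γ : X ≃ᵢ X) o) ((γ₀ : X ≃ᵢ X) o)
      simp only [IsometryEquiv.inv_apply_self] at h2
      have h3 := dist_triangle ((γ : X ≃ᵢ X) o) x ((γ₀ : X ≃ᵢ X) o)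
      have h4 : dist x ((γ₀ : X ≃ᵢ X) o) = dist ((γ₀ : X ≃ᵢ X) o) x := dist_comm _ _
      have hγ' : dist ((γ : X ≃ᵢ X) o) x ≤ k + 3 * R := hγ
      show dist (((γ₀⁻¹ * γ : Γ) : X ≃ᵢ X) o) o ≤ (k + 3 * R) + D
      rw [h1, h2]
      linarith [hγ₀]
    constructor
    · exact (hSfin.image _).subset hsub
    · calc {γ : Γ | dist ((γ : X ≃ᵢ X) o) x ≤ k + 3 * R}.ncard
          ≤ ((fun β : Γ => γ₀ * β) '' {γ : Γ | dist ((γ : X ≃ᵢ X) o) o ≤ (k + 3 * R) + D}).ncard :=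
            Set.ncard_le_ncard hsub (hSfin.image _)
        _ ≤ {γ : Γ | dist ((γ : X ≃ᵢ X) o) o ≤ (k + 3 * R) + D}.ncard :=
            Set.ncard_image_le hSfin
  intro r hr
  constructor
  · -- coverage
    intro ξ
    obtain ⟨g, hg⟩ := Quotient.exists_rep ξ
    obtain ⟨f, hf0, hfg⟩ := exists_ray_from hgeo hδ hyp4 o g
    have hmkf : GromovBoundary.mk f = ξ := by
      rw [← hg]
      exact Quotient.sound ⟨3 * dist (g.1 0) o + 2 * δ, hfg⟩
    obtain ⟨γ, hγ⟩ := hDcover (f.1 (r + D))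
    have ht0 : (0:ℝ) ≤ r + D := by linarith
    have hd1 : dist (f.1 (r + D)) o = r + D := dist_ray f hf0 ht0
    have hγ' : dist (f.1 (r + D)) ((γ : X ≃ᵢ X) o) = dist ((γ : X ≃ᵢ X) o) (f.1 (r + D)) :=
      dist_comm _ _
    refine ⟨γ, ⟨?_, ?_⟩, ?_⟩
    · have := dist_triangle (f.1 (r + D)) ((γ : X ≃ᵢ X) o) o
      linarith
    · have := dist_triangle ((γ : X ≃ᵢ X) o) (f.1 (r + D)) o
      linarith
    · intro h hh0 hmk
      have hequiv : h ≈ f := Quotient.exact (hmk.trans hmkf.symm)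
      obtain ⟨C', hC'⟩ := hequiv
      have hcl := rays_close hδ hyp4 h f hh0 hf0 hC' (r + D) ht0
      refine ⟨r + D, ht0, ?_⟩
      rw [mem_ball]
      have := dist_triangle (h.1 (r + D)) (f.1 (r + D)) ((γ : X ≃ᵢ X) o)
      linarith
  · -- multiplicity
    intro ξ
    obtain ⟨g, hg⟩ := Quotient.exists_rep ξ
    obtain ⟨f, hf0, hfg⟩ := exists_ray_from hgeo hδ hyp4 o g
    have hmkf : GromovBoundary.mk f = ξ := by
      rw [← hg]
      exact Quotient.sound ⟨3 * dist (g.1 0) o + 2 * δ, hfg⟩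
    set t₁ : ℝ := max (r - R) 0 with ht₁def
    have ht₁nn : (0:ℝ) ≤ t₁ := le_max_right _ _
    have hsub2 : {γ : Γ | (r ≤ dist ((γ : X ≃ᵢ X) o) o ∧ dist ((γ : X ≃ᵢ X) o) o ≤ r + k) ∧
          ξ ∈ boundaryShadow R o ((γ : X ≃ᵢ X) o)} ⊆
        {γ : Γ | dist ((γ : X ≃ᵢ X) o) (f.1 t₁) ≤ k + 3 * R} := by
      rintro γ ⟨⟨hlo, hhi⟩, hsh⟩
      obtain ⟨t, htnn, htb⟩ := hsh f hf0 hmkf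
      rw [mem_ball] at htb
      have hft : dist (f.1 t) o = t := dist_ray f hf0 htnn
      have hub : t ≤ r + k + R := by
        have := dist_triangle (f.1 t) ((γ : X ≃ᵢ X) o) o
        linarith
      have hlb : r - R ≤ t := by
        have h1 := dist_triangle ((γ : X ≃ᵢ X) o) (f.1 t) o
        have h2 : dist ((γ : X ≃ᵢ X) o) (f.1 t) = dist (f.1 t) ((γ : X ≃ᵢ X) o) := dist_comm _ _
        linarith
      have ht₁le : t₁ ≤ t := max_le hlb htnn
      have hdt : dist (f.1 t) (f.1 t₁) = t - t₁ := by
        rw [f.2 t t₁ htnn ht₁nn, abs_of_nonneg (by linarith)]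
      have hdiff : t - t₁ ≤ k + 2 * R := by
        rcases le_total (r - R) 0 with hco | hco
        · have : t₁ = 0 := max_eq_right hco
          rw [this]
          linarith
        · have : t₁ = r - R := max_eq_left hco
          rw [this]
          linarith
      have htri := dist_triangle ((γ : X ≃ᵢ X) o) (f.1 t) (f.1 t₁)
      have hcm : dist ((γ : X ≃ᵢ X) o) (f.1 t) = dist (f.1 t) ((γ : X ≃ᵢ X) o) := dist_comm _ _
      show dist ((γ : X ≃ᵢ X) o) (f.1 t₁) ≤ k + 3 * R
      linarith
    exact ⟨(hcount (f.1 t₁)).1.subset hsub2,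
      le_trans (Set.ncard_le_ncard hsub2 (hcount (f.1 t₁)).1) (hcount (f.1 t₁)).2⟩


end
end

section
/- Let X be a standard Borel space, M a compact metrizable space, and f_n : X → M a sequence of Borel maps. Then there is a Borel map p : X → M such that for every x ∈ X the point p(x) is an accumulation point in M of the sequence (f_n(x))_{n∈ℕ}. -/
open MeasureTheory Filter Topology

open Classical in
/-- Auxiliary: least index `i` such that `g n ∈ S ∩ ball (u i) ε` frequently, or `0`. -/
noncomputable def nxtIdx {M : Type*} [MetricSpace M] (u : ℕ → M) (g : ℕ → M)
    (S : Set M) (ε : ℝ) : ℕ :=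
  if h : ∃ i, ∃ᶠ n in atTop, g n ∈ S ∩ Metric.ball (u i) ε then Nat.find h else 0

lemma exists_freq_ball {M : Type*} [MetricSpace M] [CompactSpace M]
    (u : ℕ → M) (hu : DenseRange u) (g : ℕ → M) (S : Set M)
    (hS : ∃ᶠ n in atTop, g n ∈ S) {ε : ℝ} (hε : 0 < ε) :
    ∃ i, ∃ᶠ n in atTop, g n ∈ S ∩ Metric.ball (u i) ε := by
  obtain ⟨t, ht⟩ := IsCompact.elim_finite_subcover isCompact_univ
      (fun i => Metric.ball (u i) ε) (fun i => Metric.isOpen_ball)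
      (fun m _ => by
        obtain ⟨i, hi⟩ := hu.exists_dist_lt m hε
        exact Set.mem_iUnion.2 ⟨i, Metric.mem_ball.2 hi⟩)
  by_contra h
  push_neg at h
  have h' : ∀ᶠ n in atTop, ∀ i ∈ t, g n ∉ S ∩ Metric.ball (u i) ε :=
    (eventually_all_finset t).2 fun i _ => h i
  obtain ⟨n, hn1, hn2⟩ := (hS.and_eventually h').exists
  obtain ⟨i, hit, him⟩ := Set.mem_iUnion₂.1 (ht (Set.mem_univ (g n)))
  exact hn2 i hit ⟨hn1, him⟩

lemma measurableSet_freq {X M : Type*} [MeasurableSpace X] [MeasurableSpace M]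
    (f : ℕ → X → M) (hf : ∀ n, Measurable (f n)) (A : Set M) (hA : MeasurableSet A) :
    MeasurableSet {x | ∃ᶠ n in atTop, f n x ∈ A} := by
  have : {x | ∃ᶠ n in atTop, f n x ∈ A} = ⋂ N, ⋃ n, ⋃ _ : N ≤ n, (f n) ⁻¹' A := by
    ext x
    simp [frequently_atTop, Set.mem_iInter, Set.mem_iUnion]
  rw [this]
  exact MeasurableSet.iInter fun N => MeasurableSet.iUnion fun n =>
    MeasurableSet.iUnion fun _ => (hf n) hA

/-- Let `X` be a standard Borel space, `M` a compact metrizable space and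
`f_n : X → M` a sequence of Borel maps.  Then there is a Borel map `p : X → M` such that
`p x` is an accumulation point of the sequence `(f n x)` for every `x`. -/
theorem measurable_selection_of_accumulation_points
    {X : Type*} [MeasurableSpace X] [StandardBorelSpace X]
    {M : Type*} [TopologicalSpace M] [CompactSpace M] [TopologicalSpace.MetrizableSpace M]
    [MeasurableSpace M] [BorelSpace M]
    (f : ℕ → X → M) (hf : ∀ n, Measurable (f n)) :
    ∃ p : X → M, Measurable p ∧ ∀ x : X, MapClusterPt (p x) atTop (fun n => f n x) := by
  classical
  rcases isEmpty_or_nonempty X with hX | hX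
  · exact ⟨fun x => f 0 x, hf 0, fun x => (IsEmpty.false x).elim⟩
  obtain ⟨x₀⟩ := hX
  haveI : Nonempty M := ⟨f 0 x₀⟩
  letI : MetricSpace M := TopologicalSpace.metrizableSpaceMetric M
  obtain ⟨u, hu⟩ := TopologicalSpace.exists_dense_seq M
  set ε : ℕ → ℝ := fun k => (1 / 2 : ℝ) ^ (k + 1) with hεdef
  have hε : ∀ k, 0 < ε k := fun k => by positivity
  set F : X → ℕ → Set M := fun x =>
    Nat.rec Set.univ (fun k S =>
      S ∩ Metric.ball (u (nxtIdx u (fun n => f n x) S (ε k))) (ε k)) with hFdef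
  set idx : ℕ → X → ℕ := fun k x => nxtIdx u (fun n => f n x) (F x k) (ε k) with hidxdef
  set c : ℕ → X → M := fun k x => u (idx k x) with hcdef
  have hF0 : ∀ x, F x 0 = Set.univ := fun x => rfl
  have hFs : ∀ x k, F x (k + 1) = F x k ∩ Metric.ball (c k x) (ε k) := fun x k => rfl
  -- the frequently-invariant
  have freq : ∀ k x, ∃ᶠ n in atTop, f n x ∈ F x k := by
    intro k x
    induction k with
    | zero => exact (Filter.Eventually.of_forall fun n => Set.mem_univ (f n x)).frequently
    | succ k ih =>
      have hex := exists_freq_ball u hu (fun n => f n x) (F x k) ih (hε k)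
      rw [hFs]
      show ∃ᶠ n in atTop,
        f n x ∈ F x k ∩ Metric.ball (u (nxtIdx u (fun n => f n x) (F x k) (ε k))) (ε k)
      rw [nxtIdx, dif_pos hex]
      exact Nat.find_spec hex
  -- idx equals a Nat.find
  have idx_eq : ∀ k x (hex : ∃ i, ∃ᶠ n in atTop,
      f n x ∈ F x k ∩ Metric.ball (u i) (ε k)), idx k x = Nat.find hex := by
    intro k x hex
    simp only [hidxdef, nxtIdx, dif_pos hex]
  -- measurability of the frequently-sets, by induction on k
  have midxSet : ∀ k, (∀ B : Set M, MeasurableSet B →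
      MeasurableSet {x | ∃ᶠ n in atTop, f n x ∈ F x k ∩ B}) →
      ∀ i, MeasurableSet {x | idx k x = i} := by
    intro k hk i
    have heq : {x | idx k x = i} =
        {x | ∃ᶠ n in atTop, f n x ∈ F x k ∩ Metric.ball (u i) (ε k)} ∩
          ⋂ j, ⋂ _ : j < i, {x | ∃ᶠ n in atTop, f n x ∈ F x k ∩ Metric.ball (u j) (ε k)}ᶜ := by
      ext x
      have hex := exists_freq_ball u hu (fun n => f n x) (F x k) (freq k x) (hε k)
      rw [Set.mem_setOf_eq, idx_eq k x hex, Nat.find_eq_iff]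
      simp [Set.mem_iInter]
    rw [heq]
    exact (hk _ Metric.isOpen_ball.measurableSet).inter
      (MeasurableSet.iInter fun j => MeasurableSet.iInter fun _ =>
        (hk _ Metric.isOpen_ball.measurableSet).compl)
  have mfreqF : ∀ k, ∀ B : Set M, MeasurableSet B →
      MeasurableSet {x | ∃ᶠ n in atTop, f n x ∈ F x k ∩ B} := by
    intro k
    induction k with
    | zero =>
      intro B hB
      simp only [hF0, Set.univ_inter]
      exact measurableSet_freq f hf B hB
    | succ k ih =>
      intro B hB
      have heq : {x | ∃ᶠ n in atTop, f n x ∈ F x (k + 1) ∩ B} =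
          ⋃ i : ℕ, ({x | idx k x = i} ∩
            {x | ∃ᶠ n in atTop, f n x ∈ F x k ∩ (Metric.ball (u i) (ε k) ∩ B)}) := by
        ext x
        constructor
        · intro h
          refine Set.mem_iUnion.2 ⟨idx k x, ⟨rfl, ?_⟩⟩
          refine Frequently.mono h fun n hn => ?_
          have h1 := hn.1
          rw [hFs x k] at h1
          exact ⟨h1.1, h1.2, hn.2⟩
        · intro h
          obtain ⟨i, hi, hfreq⟩ := Set.mem_iUnion.1 h
          have hi' : idx k x = i := hi
          have hc : c k x = u i := congrArg u hi'
          refine Frequently.mono hfreq fun n hn => ?_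
          rw [hFs x k, hc]
          exact ⟨⟨hn.1, hn.2.1⟩, hn.2.2⟩
      rw [heq]
      exact MeasurableSet.iUnion fun i =>
        (midxSet k ih i).inter (ih _ (Metric.isOpen_ball.measurableSet.inter hB))
  have midx : ∀ k, Measurable (idx k) := fun k =>
    measurable_to_countable' fun i => midxSet k (mfreqF k) i
  have mc : ∀ k, Measurable (c k) := fun k => measurable_from_top.comp (midx k)
  -- convergence of the centers
  have hdist : ∀ x k, dist (c k x) (c (k + 1) x) ≤ 1 * (1 / 2 : ℝ) ^ k := by
    intro x k
    obtain ⟨n, hn⟩ := (freq (k + 1 + 1) x).exists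
    rw [hFs x (k + 1)] at hn
    have h1 : f n x ∈ Metric.ball (c (k + 1) x) (ε (k + 1)) := hn.2
    have h2 : f n x ∈ Metric.ball (c k x) (ε k) := by
      have := hn.1
      rw [hFs x k] at this
      exact this.2
    have d1 : dist (c k x) (f n x) < ε k := by
      rw [dist_comm]; exact Metric.mem_ball.1 h2
    have d2 : dist (f n x) (c (k + 1) x) < ε (k + 1) := Metric.mem_ball.1 h1
    have : dist (c k x) (c (k + 1) x) ≤ dist (c k x) (f n x) + dist (f n x) (c (k + 1) x) :=
      dist_triangle _ _ _
    have hεk : ε k + ε (k + 1) ≤ 1 * (1 / 2 : ℝ) ^ k := by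
      simp only [hεdef]
      rw [one_mul, pow_succ, pow_succ, pow_succ]
      have hp : (0 : ℝ) ≤ (1 / 2 : ℝ) ^ k := by positivity
      nlinarith
    linarith
  have hcauchy : ∀ x, CauchySeq (fun k => c k x) := fun x =>
    cauchySeq_of_le_geometric (1 / 2) 1 (by norm_num) (hdist x)
  set p : X → M := fun x => limUnder atTop (fun k => c k x) with hpdef
  have hp : ∀ x, Tendsto (fun k => c k x) atTop (𝓝 (p x)) := fun x =>
    (hcauchy x).tendsto_limUnder
  refine ⟨p, ?_, ?_⟩
  · exact measurable_of_tendsto_metrizable mc (tendsto_pi_nhds.2 hp)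
  · intro x
    rw [mapClusterPt_iff_frequently]
    intro s hs
    obtain ⟨r, hr, hball⟩ := Metric.mem_nhds_iff.1 hs
    have h1 : ∀ᶠ k in atTop, dist (c k x) (p x) < r / 2 :=
      Metric.tendsto_nhds.mp (hp x) (r / 2) (by linarith)
    have hε0 : Tendsto ε atTop (𝓝 0) :=
      (tendsto_pow_atTop_nhds_zero_of_lt_one (by norm_num) (by norm_num)).comp
        (tendsto_add_atTop_nat 1)
    have h2 : ∀ᶠ k in atTop, ε k < r / 2 := hε0.eventually_lt_const (by linarith)
    obtain ⟨k, hk1, hk2⟩ := (h1.and h2).exists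
    refine (freq (k + 1) x).mono fun n hn => ?_
    rw [hFs] at hn
    have hd : dist (f n x) (c k x) < ε k := Metric.mem_ball.1 hn.2
    apply hball
    rw [Metric.mem_ball]
    calc dist (f n x) (p x) ≤ dist (f n x) (c k x) + dist (c k x) (p x) := dist_triangle _ _ _
      _ < r := by linarith
end
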